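/- If f is a transcendental meromorphic map in the Speiser class 𝒮 (i.e., Sing(f) is finite), then the set of points z ∈ ℂ that are not Good Pressure Starting (GPS) points has Hausdorff dimension zero. -/

import Mathlib

open Filter Set Topology OnePoint

/-- Spherical (chordal-angular) distance on the Riemann sphere `OnePoint ℂ`. -/
noncomputable def sphDist (u v : OnePoint ℂ) : ℝ :=
  Option.elim u
    (Option.elim v 0 fun w => 2 * Real.arctan (1 / ‖w‖))
    fun z => Option.elim v (2 * Real.arctan (1 / ‖z‖))
      fun w => 2 * Real.arctan (‖z - w‖ / ‖1 + (starRingEnd ℂ) z * w‖)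

/-- Spherical distance from a point to a set. -/
noncomputable def sphDistSet (u : OnePoint ℂ) (A : Set (OnePoint ℂ)) : ℝ :=
  sInf (sphDist u '' A)

/-- Spherical diameter of a set. -/
noncomputable def sphDiam (A : Set (OnePoint ℂ)) : ℝ :=
  sSup {d : ℝ | ∃ x ∈ A, ∃ y ∈ A, d = sphDist x y}

/-- Spherical derivative of a holomorphic map. -/
noncomputable def sphDeriv (f : ℂ → ℂ) (z : ℂ) : ℝ :=
  (1 + ‖z‖ ^ 2) * ‖deriv f z‖ / (1 + ‖f z‖ ^ 2)

/-- The set of singular values of `f⁻¹` (critical and asymptotic values): `a` is *not*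
singular iff every branch of `f⁻¹` extends holomorphically over a ball around `a`. -/
def SingularValues (f : ℂ → ℂ) : Set ℂ :=
  {a | ∀ r > 0, ¬ ∀ w : ℂ, f w ∈ Metric.ball a r →
      ∃ g : ℂ → ℂ, AnalyticOnNhd ℂ g (Metric.ball a r) ∧
        Set.EqOn (f ∘ g) id (Metric.ball a r) ∧ g (f w) = w}

/-- `P_n(f) = ⋃_{k<n} f^k(Sing(f))`. -/
def Pn (f : ℂ → ℂ) (n : ℕ) : Set ℂ := ⋃ k < n, f^[k] '' SingularValues f

/-- The post-singular set `P(f)`. -/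
def PostSing (f : ℂ → ℂ) : Set ℂ := ⋃ k, f^[k] '' SingularValues f

/-- `z` is a Good Pressure Starting point: `ln d(z, P_n(f)) = o(n)`. -/
def GPS (f : ℂ → ℂ) (z : ℂ) : Prop :=
  Tendsto (fun n : ℕ =>
      Real.log (sphDistSet z ((fun w : ℂ => (w : OnePoint ℂ)) '' Pn f n)) / n)
    atTop (nhds 0)

/-- Equicontinuity (w.r.t. the spherical metric) of the family of iterates at `z`. -/
def EquicontAt (f : ℂ → ℂ) (z : ℂ) : Prop :=
  ∃ δ > 0, ∀ ε > 0, ∃ δ' > 0, δ' ≤ δ ∧ ∀ w : ℂ, sphDist w z < δ' →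
    ∀ n : ℕ, sphDist (f^[n] w) (f^[n] z) < ε

/-- The Julia set: points where the family of iterates is not equicontinuous on any
neighbourhood (w.r.t. the spherical metric). -/
def JuliaSet (f : ℂ → ℂ) : Set ℂ := {z | ¬ EquicontAt f z}

/-- `f` is a transcendental meromorphic function on `ℂ` (not rational). -/
def TransMeromorphic (f : ℂ → ℂ) : Prop :=
  MeromorphicOn f Set.univ ∧
    ¬ ∃ p q : Polynomial ℂ, ∀ z : ℂ, Polynomial.eval z q ≠ 0 →
      f z = Polynomial.eval z p / Polynomial.eval z q

/-- `S_n(t,z) = Σ_{w ∈ f^{-n}(z)} |(f^n)^*(w)|^{-t}` (valued in `ℝ≥0∞`). -/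
noncomputable def Sn (f : ℂ → ℂ) (n : ℕ) (t : ℝ) (z : ℂ) : ENNReal :=
  ∑' w : ↥(f^[n] ⁻¹' {z}), ENNReal.ofReal (sphDeriv f^[n] w.1 ^ (-t))

section Helpers
open Filter Set Topology MeasureTheory
open scoped NNReal ENNReal

lemma my_tan_le_two_mul {a : ℝ} (h0 : 0 ≤ a) (h1 : a ≤ 1) : Real.tan a ≤ 2 * a := by
  have hcos : (1:ℝ)/2 ≤ Real.cos a := by
    have := Real.one_sub_sq_div_two_le_cos (x := a)
    nlinarith [sq_nonneg a, sq_nonneg (1-a)]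
  have hcpos : 0 < Real.cos a := by linarith
  rw [Real.tan_eq_sin_div_cos, div_le_iff₀ hcpos]
  nlinarith [Real.sin_le h0]

lemma my_arctan_lt {r a : ℝ} (hr : 0 ≤ r) (ha : 0 < a) (ha1 : a ≤ 1)
    (h : Real.arctan r < a) : r < 2 * a := by
  have hapi : a < Real.pi / 2 := by
    have := Real.pi_gt_three; linarith
  have h0 : 0 ≤ Real.arctan r := by
    have := Real.arctan_strictMono.monotone hr
    simpa using this
  have := Real.tan_lt_tan_of_nonneg_of_lt_pi_div_two h0 hapi h
  rw [Real.tan_arctan] at this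
  calc r < Real.tan a := this
    _ ≤ 2 * a := my_tan_le_two_mul ha.le ha1

lemma my_two_ofReal (x : ℝ) : 2 * ENNReal.ofReal x = ENNReal.ofReal (2 * x) := by
  rw [ENNReal.ofReal_mul (by norm_num : (0:ℝ) ≤ 2), ENNReal.ofReal_ofNat]

lemma my_dimH_zero (h : ℕ → ℂ) (q : ℕ) (c θ : ℝ) (hc : 0 < c) (hθ0 : 0 < θ) (hθ1 : θ < 1) :
    dimH (⋂ N : ℕ, ⋃ n, ⋃ (_ : N ≤ n), ⋃ j ∈ Finset.range (n * q),
      Metric.ball (h j) (c * θ ^ n)) = 0 := by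
  set A := ⋂ N : ℕ, ⋃ n, ⋃ (_ : N ≤ n), ⋃ j ∈ Finset.range (n * q),
      Metric.ball (h j) (c * θ ^ n) with hA
  have key : ∀ d : ℝ≥0, 0 < d → μH[(d : ℝ)] A ≠ ⊤ := by
    intro d hd
    have hd' : (0:ℝ) < (d:ℝ) := by exact_mod_cast hd
    set t : ℕ → ℕ × ℕ → Set ℂ := fun N p =>
      if N ≤ p.1 ∧ p.2 < p.1 * q then Metric.ball (h p.2) (c * θ ^ p.1) else ∅ with ht_def
    have hr : Tendsto (fun N : ℕ => ENNReal.ofReal (2 * (c * θ ^ N))) atTop (nhds 0) := by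
      rw [show (0 : ENNReal) = ENNReal.ofReal (2 * (c * 0)) by simp]
      exact (ENNReal.continuous_ofReal.tendsto _).comp
        (((tendsto_pow_atTop_nhds_zero_of_lt_one hθ0.le hθ1).const_mul c).const_mul 2)
    have hball : ∀ (x : ℂ) (n : ℕ), EMetric.diam (Metric.ball x (c * θ ^ n))
        ≤ ENNReal.ofReal (2 * (c * θ ^ n)) := by
      intro x n
      rw [← my_two_ofReal, ← Metric.emetric_ball]
      exact EMetric.diam_ball
    have hdiam : ∀ N (p : ℕ × ℕ),
        EMetric.diam (t N p) ≤ ENNReal.ofReal (2 * (c * θ ^ N)) := by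
      intro N p
      rw [ht_def]; dsimp only
      split_ifs with hp
      · refine (hball _ _).trans (ENNReal.ofReal_le_ofReal ?_)
        have : θ ^ p.1 ≤ θ ^ N := pow_le_pow_of_le_one hθ0.le hθ1.le hp.1
        nlinarith
      · simp [EMetric.diam]
    have hcover : ∀ N, A ⊆ ⋃ p : ℕ × ℕ, t N p := by
      intro N z hz
      rw [hA] at hz
      obtain ⟨n, hn, hzn⟩ := by
        have := mem_iInter.1 hz N
        simpa using this
      obtain ⟨j, hj, hzj⟩ := by simpa using hzn
      exact mem_iUnion.2 ⟨(n, j), by simp [ht_def, hn, hj, hzj]⟩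
    have hle := MeasureTheory.Measure.hausdorffMeasure_le_liminf_tsum (d := (d:ℝ)) (s := A)
      (r := fun N : ℕ => ENNReal.ofReal (2 * (c * θ ^ N))) hr t
      (Eventually.of_forall fun N => hdiam N) (Eventually.of_forall hcover)
    set r0 : ℝ := θ ^ (d : ℝ) with hr0
    have hr00 : 0 < r0 := Real.rpow_pos_of_pos hθ0 _
    have hr01 : r0 < 1 := Real.rpow_lt_one hθ0.le hθ1 hd'
    have hsum : Summable (fun n : ℕ => ((n * q : ℕ) : ℝ) * (2 * (c * θ ^ n)) ^ (d : ℝ)) := by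
      have hb : ∀ n : ℕ, ((n * q : ℕ) : ℝ) * (2 * (c * θ ^ n)) ^ (d : ℝ)
          = (q * (2 * c) ^ (d : ℝ)) * ((n : ℝ) ^ 1 * r0 ^ n) := by
        intro n
        have hθn : (0:ℝ) ≤ θ ^ n := by positivity
        rw [show (2 : ℝ) * (c * θ ^ n) = (2 * c) * θ ^ n by ring,
          Real.mul_rpow (by positivity) hθn, hr0,
          ← Real.rpow_natCast θ n, ← Real.rpow_mul hθ0.le, mul_comm (n:ℝ) (d:ℝ),
          Real.rpow_mul hθ0.le, Real.rpow_natCast]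
        push_cast
        ring
      rw [funext hb]
      exact ((summable_pow_mul_geometric_of_norm_lt_one (R := ℝ) 1
        (by rwa [Real.norm_eq_abs, abs_of_pos hr00])).mul_left _)
    have hT : (∑' n : ℕ, ((n * q : ℕ) : ENNReal) *
        (ENNReal.ofReal (2 * (c * θ ^ n))) ^ (d : ℝ)) ≠ ⊤ := by
      have heq : ∀ n : ℕ, ((n * q : ℕ) : ENNReal) *
          (ENNReal.ofReal (2 * (c * θ ^ n))) ^ (d : ℝ)
          = ENNReal.ofReal (((n * q : ℕ) : ℝ) * (2 * (c * θ ^ n)) ^ (d : ℝ)) := by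
        intro n
        rw [ENNReal.ofReal_rpow_of_nonneg (by positivity) hd'.le,
          ENNReal.ofReal_mul (by positivity), ENNReal.ofReal_natCast]
      rw [funext heq, ← ENNReal.ofReal_tsum_of_nonneg (fun n => by positivity) hsum]
      exact ENNReal.ofReal_ne_top
    have hbound : ∀ N : ℕ, (∑' p : ℕ × ℕ, EMetric.diam (t N p) ^ (d : ℝ))
        ≤ ∑' n : ℕ, ((n * q : ℕ) : ENNReal) * (ENNReal.ofReal (2 * (c * θ ^ n))) ^ (d : ℝ) := by
      intro N
      refine le_trans (le_of_eq (ENNReal.tsum_prod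
        (f := fun n j => EMetric.diam (t N (n, j)) ^ (d : ℝ)))) ?_
      refine ENNReal.tsum_le_tsum fun n => ?_
      have hinner : ∀ j : ℕ, EMetric.diam (t N (n, j)) ^ (d : ℝ)
          ≤ if j < n * q then (ENNReal.ofReal (2 * (c * θ ^ n))) ^ (d : ℝ) else 0 := by
        intro j
        rw [ht_def]; dsimp only
        split_ifs with h1 h2 h2
        · exact ENNReal.rpow_le_rpow (hball _ _) hd'.le
        · exact absurd h1.2 h2
        · simp [EMetric.diam, ENNReal.zero_rpow_of_pos hd']
        · simp [EMetric.diam, ENNReal.zero_rpow_of_pos hd']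
      calc (∑' j : ℕ, EMetric.diam (t N (n, j)) ^ (d : ℝ))
          ≤ ∑' j : ℕ, if j < n * q then (ENNReal.ofReal (2 * (c * θ ^ n))) ^ (d : ℝ) else 0 :=
            ENNReal.tsum_le_tsum hinner
        _ = ((n * q : ℕ) : ENNReal) * (ENNReal.ofReal (2 * (c * θ ^ n))) ^ (d : ℝ) := by
            rw [tsum_eq_sum (s := Finset.range (n * q))
              (fun j hj => by simp [Finset.mem_range.not.1 hj])]
            rw [Finset.sum_ite_of_true (fun j hj => Finset.mem_range.1 hj),
              Finset.sum_const, Finset.card_range, nsmul_eq_mul]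
    have hfin : μH[(d:ℝ)] A ≤ ∑' n : ℕ, ((n * q : ℕ) : ENNReal) *
        (ENNReal.ofReal (2 * (c * θ ^ n))) ^ (d : ℝ) := by
      refine hle.trans ?_
      calc liminf (fun N => ∑' p : ℕ × ℕ, EMetric.diam (t N p) ^ (d : ℝ)) atTop
          ≤ liminf (fun _ : ℕ => ∑' n : ℕ, ((n * q : ℕ) : ENNReal) *
              (ENNReal.ofReal (2 * (c * θ ^ n))) ^ (d : ℝ)) atTop :=
            liminf_le_liminf (Eventually.of_forall hbound)
        _ = _ := liminf_const _
    exact fun htop => hT (top_le_iff.1 (htop ▸ hfin))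
  by_contra hne
  have hpos : 0 < dimH A := pos_iff_ne_zero.2 hne
  obtain ⟨d, hd0, hdlt⟩ := ENNReal.lt_iff_exists_nnreal_btwn.1 hpos
  exact absurd (dimH_le_of_hausdorffMeasure_ne_top (key d (by exact_mod_cast hd0))) hdlt.not_ge

end Helpers

open Filter Set Topology OnePoint

lemma sphDist_nonneg (u v : OnePoint ℂ) : 0 ≤ sphDist u v := by
  have harct : ∀ x : ℝ, 0 ≤ x → 0 ≤ 2 * Real.arctan x := fun x hx => by
    have := Real.arctan_strictMono.monotone hx
    simp only [Real.arctan_zero] at this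
    linarith
  cases u with
  | infty => cases v with
    | infty => exact le_refl _
    | coe w => exact harct _ (by positivity)
  | coe z => cases v with
    | infty => exact harct _ (by positivity)
    | coe w => exact harct _ (by positivity)

lemma sphDist_lt_pi (z w : ℂ) : sphDist (z : OnePoint ℂ) (w : OnePoint ℂ) < Real.pi := by
  show 2 * Real.arctan _ < Real.pi
  have := Real.arctan_lt_pi_div_two (‖z - w‖ / ‖1 + (starRingEnd ℂ) z * w‖)
  linarith


/-- For a transcendental meromorphic map in the Speiser class `𝒮` (finitely many singular
values), the set of non-GPS points has Hausdorff dimension zero. -/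
theorem stmt_11 (f : ℂ → ℂ) (hf : TransMeromorphic f)
    (hS : (SingularValues f).Finite) :
    dimH {z : ℂ | ¬ GPS f z} = 0 := by
  classical
  by_cases hSne : (SingularValues f).Nonempty
  swap
  · have hempty : SingularValues f = ∅ := not_nonempty_iff_eq_empty.1 hSne
    have hnone : {z : ℂ | ¬ GPS f z} = ∅ := by
      ext z
      simp only [mem_setOf_eq, mem_empty_iff_false, iff_false, not_not]
      have hPn : ∀ n : ℕ, Pn f n = ∅ := fun n => by simp [Pn, hempty]
      have : (fun n : ℕ =>
          Real.log (sphDistSet z ((fun w : ℂ => (w : OnePoint ℂ)) '' Pn f n)) / n)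
          = fun _ : ℕ => (0:ℝ) := by
        funext n
        rw [hPn n]
        simp [sphDistSet, Real.sInf_empty, Real.log_zero]
      show Tendsto _ atTop (nhds 0)
      rw [this]
      exact tendsto_const_nhds
    rw [hnone]
    exact dimH_empty
  obtain ⟨s₀, hs₀⟩ := hSne
  -- enumeration of the singular values
  set L : List ℂ := hS.toFinset.toList with hL
  set q : ℕ := L.length with hq_def
  have hs₀L : s₀ ∈ L := by rw [hL, Finset.mem_toList]; exact hS.mem_toFinset.2 hs₀
  have hq : 0 < q := List.length_pos_iff.2 (List.ne_nil_of_mem hs₀L)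
  set e : ℕ → ℂ := fun i => L.getD i 0 with he
  have henum : ∀ s ∈ SingularValues f, ∃ i < q, e i = s := by
    intro s hs
    have hsL : s ∈ L := by rw [hL, Finset.mem_toList]; exact hS.mem_toFinset.2 hs
    obtain ⟨i, hi, hgt⟩ := List.mem_iff_getElem.1 hsL
    refine ⟨i, hi, ?_⟩
    show L.getD i 0 = s
    rw [List.getD_eq_getElem L 0 hi]
    exact hgt
  set h : ℕ → ℂ := fun j => f^[j / q] (e (j % q)) with hh
  have hcover_p : ∀ n : ℕ, ∀ p ∈ Pn f n, ∃ j < n * q, h j = p := by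
    intro n p hp
    simp only [Pn, mem_iUnion, mem_image] at hp
    obtain ⟨k, hk, s, hsS, rfl⟩ := hp
    obtain ⟨i, hi, hei⟩ := henum s hsS
    refine ⟨i + k * q, ?_, ?_⟩
    · calc i + k * q < q + k * q := by omega
        _ = (k + 1) * q := by ring
        _ ≤ n * q := Nat.mul_le_mul_right q hk
    · rw [hh]
      simp only [Nat.add_mul_div_right _ _ hq, Nat.add_mul_mod_self_right,
        Nat.div_eq_of_lt hi, Nat.mod_eq_of_lt hi, Nat.zero_add, hei]
  -- the countable exceptional set
  set C : Set ℂ := (fun p : ℂ => -(((starRingEnd ℂ) p)⁻¹)) '' PostSing f with hC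
  have hCc : C.Countable := by
    refine Set.Countable.image ?_ _
    exact countable_iUnion fun k => ((hS.image f^[k]).countable)
  set θ : ℕ → ℝ := fun m => Real.exp (-(1 / ((m:ℝ) + 1))) with hθ
  have hθ0 : ∀ m, 0 < θ m := fun m => Real.exp_pos _
  have hθ1 : ∀ m, θ m < 1 := fun m => by
    rw [hθ]
    refine Real.exp_lt_one_iff.2 ?_
    have : (0:ℝ) < (m:ℝ) + 1 := by positivity
    simp only [neg_lt, neg_zero]
    positivity
  set K : ℕ → ℝ := fun R => 2 * (1 + (R:ℝ) * (2 * R + 2)) with hK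
  have hK0 : ∀ R, 0 < K R := fun R => by rw [hK]; positivity
  have hmain : {z : ℂ | ¬ GPS f z} ⊆ C ∪ ⋃ m : ℕ, ⋃ R : ℕ,
      ⋂ N : ℕ, ⋃ n, ⋃ (_ : N ≤ n), ⋃ j ∈ Finset.range (n * q),
        Metric.ball (h j) (K R * θ m ^ n) := by
    intro z hz
    by_cases hzC : z ∈ C
    · exact Or.inl hzC
    refine Or.inr ?_
    set D : ℕ → ℝ := fun n =>
      sphDistSet (↑z) ((fun w : ℂ => (w : OnePoint ℂ)) '' Pn f n) with hDdef
    have hz' : ¬ Tendsto (fun n : ℕ => Real.log (D n) / n) atTop (nhds 0) := hz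
    rw [Metric.tendsto_atTop] at hz'
    push_neg at hz'
    obtain ⟨ε, hε, hfreq⟩ := hz'
    -- basics about D
    have hPn_ne : ∀ n : ℕ, 0 < n → (Pn f n).Nonempty := by
      intro n hn
      refine ⟨s₀, ?_⟩
      simp only [Pn, mem_iUnion, mem_image]
      exact ⟨0, hn, s₀, hs₀, by simp⟩
    have hbdd : ∀ n : ℕ, BddBelow (sphDist ↑z '' ((fun w : ℂ => (w : OnePoint ℂ)) '' Pn f n)) := by
      intro n
      exact ⟨0, by rintro x ⟨y, _, rfl⟩; exact sphDist_nonneg _ _⟩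
    have hDnonneg : ∀ n, 0 ≤ D n := fun n =>
      Real.sInf_nonneg (by rintro x ⟨y, _, rfl⟩; exact sphDist_nonneg _ _)
    have hDle : ∀ n : ℕ, 0 < n → D n ≤ Real.pi := by
      intro n hn
      obtain ⟨p, hp⟩ := hPn_ne n hn
      have hmem : sphDist ↑z ↑p ∈ sphDist ↑z '' ((fun w : ℂ => (w : OnePoint ℂ)) '' Pn f n) :=
        ⟨↑p, ⟨p, hp, rfl⟩, rfl⟩
      exact (csInf_le (hbdd n) hmem).trans (sphDist_lt_pi z p).le
    -- eventually log D n / n < ε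
    have hev1 : ∀ᶠ n : ℕ in atTop, Real.log (D n) / n < ε := by
      have htend : Tendsto (fun n : ℕ => Real.log Real.pi / n) atTop (nhds 0) :=
        tendsto_const_div_atTop_nhds_zero_nat _
      filter_upwards [eventually_gt_atTop 0, htend.eventually_lt_const hε] with n hn1 hn2
      have hlog : Real.log (D n) ≤ Real.log Real.pi := by
        rcases eq_or_lt_of_le (hDnonneg n) with h0 | h0
        · rw [← h0, Real.log_zero]
          exact Real.log_nonneg (by linarith [Real.pi_gt_three])
        · exact Real.log_le_log h0 (hDle n hn1)
      have hnR : (0:ℝ) < (n:ℝ) := by exact_mod_cast hn1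
      calc Real.log (D n) / n ≤ Real.log Real.pi / n := by gcongr
          _ < ε := hn2
    -- choose m and R
    set m : ℕ := ⌈1/ε⌉₊ with hm
    set R : ℕ := ⌈‖z‖⌉₊ with hR
    have habsz : ‖z‖ ≤ (R:ℝ) := Nat.le_ceil _
    have hmε : 1 / ((m:ℝ) + 1) ≤ ε := by
      have h1 : 1/ε ≤ (m:ℝ) + 1 := (Nat.le_ceil (1/ε)).trans (by linarith)
      rw [div_le_iff₀ hε] at h1
      rw [div_le_iff₀ (by positivity : (0:ℝ) < (m:ℝ) + 1)]
      linarith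
    have hev2 : ∀ᶠ n : ℕ in atTop, 2 * θ m ^ n < 1 / (2 * (R:ℝ) + 2) := by
      have htend : Tendsto (fun n : ℕ => 2 * θ m ^ n) atTop (nhds 0) := by
        simpa using (tendsto_pow_atTop_nhds_zero_of_lt_one (hθ0 m).le (hθ1 m)).const_mul 2
      exact htend.eventually_lt_const (by positivity)
    -- show the required membership in the triple intersection
    refine mem_iUnion.2 ⟨m, mem_iUnion.2 ⟨R, mem_iInter.2 fun N => ?_⟩⟩
    obtain ⟨N₂, hN₂⟩ := eventually_atTop.1 ((hev1.and hev2).and (eventually_gt_atTop 0))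
    obtain ⟨n, hnge, hdist⟩ := hfreq (max N N₂)
    obtain ⟨⟨hlt, hsmall⟩, hnpos⟩ := hN₂ n (le_trans (le_max_right _ _) hnge)
    have hnN : N ≤ n := le_trans (le_max_left _ _) hnge
    -- log D n / n ≤ -ε
    have habs : ε ≤ |Real.log (D n)| / n := by
      simpa [Real.dist_eq, abs_div] using hdist
    have hneg : Real.log (D n) / n ≤ -ε := by
      rcases abs_cases (Real.log (D n)) with ⟨heq, _⟩ | ⟨heq, _⟩
      · rw [heq] at habs; linarith
      · rw [heq, neg_div] at habs; linarith
    -- D n < 2 θ^n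
    have hθpow : Real.exp (-(ε * n)) ≤ θ m ^ n := by
      rw [hθ, ← Real.exp_nat_mul]
      apply Real.exp_le_exp.2
      have hn' : (0:ℝ) ≤ (n:ℝ) := Nat.cast_nonneg n
      have := mul_le_mul_of_nonneg_left hmε hn'
      calc -(ε * n) = -((n:ℝ) * ε) := by ring
        _ ≤ -((n:ℝ) * (1 / ((m:ℝ) + 1))) := by linarith
        _ = (n:ℝ) * -(1 / ((m:ℝ) + 1)) := by ring
    have hDn : D n < 2 * θ m ^ n := by
      have hθn : 0 < θ m ^ n := pow_pos (hθ0 m) n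
      rcases eq_or_lt_of_le (hDnonneg n) with h0 | h0
      · rw [← h0]; positivity
      · have hnR : (0:ℝ) < (n:ℝ) := by exact_mod_cast hnpos
        have hlogle : Real.log (D n) ≤ -(ε * n) := by
          rw [div_le_iff₀ hnR] at hneg
          linarith [hneg]
        have := Real.exp_le_exp.2 hlogle
        rw [Real.exp_log h0] at this
        linarith [this.trans hθpow]
    -- extract a close point p of Pn f n
    have hne : (sphDist ↑z '' ((fun w : ℂ => (w : OnePoint ℂ)) '' Pn f n)).Nonempty :=
      (((hPn_ne n hnpos).image _).image _)
    obtain ⟨x, hx, hxlt⟩ := exists_lt_of_csInf_lt hne hDn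
    obtain ⟨w, ⟨p, hp, rfl⟩, rfl⟩ := hx
    -- unfold the spherical distance
    have harc : Real.arctan (‖z - p‖ /
        ‖1 + (starRingEnd ℂ) z * p‖) < θ m ^ n := by
      have : (2:ℝ) * Real.arctan (‖z - p‖ /
          ‖1 + (starRingEnd ℂ) z * p‖) < 2 * θ m ^ n := hxlt
      linarith
    set rr : ℝ := ‖z - p‖ / ‖1 + (starRingEnd ℂ) z * p‖ with hrr_def
    set Dd : ℝ := ‖1 + (starRingEnd ℂ) z * p‖ with hDd_def
    have hθn1 : θ m ^ n ≤ 1 := pow_le_one₀ (hθ0 m).le (hθ1 m).le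
    have hrr : rr < 2 * θ m ^ n :=
      my_arctan_lt (by positivity) (pow_pos (hθ0 m) n) hθn1 harc
    -- p is in the post-singular set
    have hpPS : p ∈ PostSing f := by
      simp only [Pn, mem_iUnion, mem_image] at hp
      obtain ⟨k, _, s, hsS, rfl⟩ := hp
      exact mem_iUnion.2 ⟨k, mem_image_of_mem _ hsS⟩
    -- the denominator is nonzero since z ∉ C
    have hDdne : Dd ≠ 0 := by
      intro h0
      apply hzC
      have h0' : (1 + (starRingEnd ℂ) z * p) = 0 := norm_eq_zero.1 h0
      have hp0 : p ≠ 0 := by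
        intro hp0
        rw [hp0, mul_zero, add_zero] at h0'
        exact one_ne_zero h0'
      have hcz : (starRingEnd ℂ) z = -(p⁻¹) := by
        field_simp
        linear_combination h0'
      have hzval : z = -(((starRingEnd ℂ) p)⁻¹) := by
        have := congrArg (starRingEnd ℂ) hcz
        rw [Complex.conj_conj, map_neg, map_inv₀] at this
        exact this
      exact ⟨p, hpPS, hzval.symm⟩
    have hDdpos : 0 < Dd := lt_of_le_of_ne (by positivity) (Ne.symm hDdne)
    have hDdle : Dd ≤ 1 + (R:ℝ) * ‖p‖ := by
      rw [hDd_def]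
      calc ‖1 + (starRingEnd ℂ) z * p‖
          ≤ ‖1‖ + ‖(starRingEnd ℂ) z * p‖ := norm_add_le _ _
        _ = 1 + ‖z‖ * ‖p‖ := by
            rw [norm_one, norm_mul, Complex.norm_conj]
        _ ≤ 1 + (R:ℝ) * ‖p‖ :=
            add_le_add_right (mul_le_mul_of_nonneg_right habsz (norm_nonneg p)) 1
    -- p cannot be too far
    have hplt : ‖p‖ < 2 * (R:ℝ) + 2 := by
      by_contra hge
      push_neg at hge
      have hnum : ‖p‖ - (R:ℝ) ≤ ‖z - p‖ := by
        have h1 : ‖p‖ ≤ ‖p - z‖ + ‖z‖ := by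
          simpa using norm_add_le (p - z) z
        have h2 : ‖p - z‖ = ‖z - p‖ := norm_sub_rev p z
        linarith
      have hfrac : 1 / (2 * (R:ℝ) + 2) ≤ rr := by
        have hR0 : (0:ℝ) ≤ (R:ℝ) := Nat.cast_nonneg R
        have h1 : (‖p‖ - (R:ℝ)) / (1 + (R:ℝ) * ‖p‖)
            ≤ ‖z - p‖ / Dd :=
          div_le_div₀ (norm_nonneg _) hnum hDdpos hDdle
        have h2 : 1 / (2 * (R:ℝ) + 2)
            ≤ (‖p‖ - (R:ℝ)) / (1 + (R:ℝ) * ‖p‖) := by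
          rw [div_le_div_iff₀ (by positivity) (by positivity)]
          nlinarith [norm_nonneg p]
        exact le_trans (h2.trans h1) (le_of_eq rfl)
      linarith [hfrac.trans_lt hrr]
    -- |z - p| < K R * θ^n
    have hzp : ‖z - p‖ < K R * θ m ^ n := by
      have hzpe : ‖z - p‖ = rr * Dd := by
        rw [hrr_def, div_mul_cancel₀ _ hDdne]
      have hDdle2 : Dd ≤ 1 + (R:ℝ) * (2 * (R:ℝ) + 2) := by
        have : (R:ℝ) * ‖p‖ ≤ (R:ℝ) * (2 * (R:ℝ) + 2) :=
          mul_le_mul_of_nonneg_left hplt.le (Nat.cast_nonneg R)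
        linarith
      rw [hzpe, hK]
      have hrr0 : 0 ≤ rr := by rw [hrr_def]; positivity
      have hR0 : (0:ℝ) ≤ (R:ℝ) := Nat.cast_nonneg R
      calc rr * Dd ≤ rr * (1 + (R:ℝ) * (2 * (R:ℝ) + 2)) :=
            mul_le_mul_of_nonneg_left hDdle2 hrr0
        _ < (2 * θ m ^ n) * (1 + (R:ℝ) * (2 * (R:ℝ) + 2)) :=
            mul_lt_mul_of_pos_right hrr (by positivity)
        _ = 2 * (1 + (R:ℝ) * (2 * (R:ℝ) + 2)) * θ m ^ n := by ring
    -- conclude membership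
    obtain ⟨j, hj, hjp⟩ := hcover_p n p hp
    refine mem_iUnion.2 ⟨n, mem_iUnion.2 ⟨hnN, mem_iUnion.2 ⟨j,
      mem_iUnion.2 ⟨Finset.mem_range.2 hj, ?_⟩⟩⟩⟩
    rw [Metric.mem_ball, Complex.dist_eq, hjp]
    exact hzp
  -- assemble the dimension bound
  refine le_antisymm ?_ zero_le
  calc dimH {z : ℂ | ¬ GPS f z}
      ≤ dimH (C ∪ ⋃ m : ℕ, ⋃ R : ℕ,
        ⋂ N : ℕ, ⋃ n, ⋃ (_ : N ≤ n), ⋃ j ∈ Finset.range (n * q),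
          Metric.ball (h j) (K R * θ m ^ n)) := dimH_mono hmain
    _ ≤ 0 := by
        rw [dimH_union]
        apply max_le
        · exact le_of_eq (dimH_countable hCc)
        · rw [dimH_iUnion]
          refine iSup_le fun m => ?_
          rw [dimH_iUnion]
          refine iSup_le fun R => ?_
          exact le_of_eq (my_dimH_zero h q (K R) (θ m) (hK0 R) (hθ0 m) (hθ1 m))
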